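/- arXiv:0909.3356 — 6 statements merged into one kernel-verified Lean document; each statement's English description precedes it below -/
import Mathlib

section
/- Let S be a set of links in the plane, each link i having transmitter t_i and receiver r_i with |t_i − r_i| ≤ r_tx for all i. Suppose |t_j − r_i| ≥ r_xcl for all distinct i, j ∈ S, where r_xcl > r_tx. Then for every i ∈ S, Σ_{j ∈ S, j ≠ i} |t_j − r_i|^{-α} ≤ k(α)·(r_xcl − r_tx)^{-α}, where k(α) = Σ_{k=1}^∞ 4·⌈π(2k+2)⌉·k^{-α} and α > 2. -/
open MeasureTheory Metric Finset
open scoped ENNReal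

lemma vol2' (c : EuclideanSpace ℝ (Fin 2)) (rr : ℝ) :
    volume (Metric.ball c rr) = ENNReal.ofReal rr ^ 2 * ENNReal.ofReal Real.pi := by
  rw [EuclideanSpace.volume_ball]
  norm_num [Fintype.card_fin, Real.sq_sqrt Real.pi_nonneg, Real.Gamma_two]

lemma packing (d : ℝ) (hd : 0 < d) (x : EuclideanSpace ℝ (Fin 2))
    (T : Finset (EuclideanSpace ℝ (Fin 2))) (k : ℕ) (hk : 1 ≤ k)
    (hsep : ∀ p ∈ T, ∀ q ∈ T, p ≠ q → d ≤ dist p q)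
    (hlo : ∀ p ∈ T, (k : ℝ) * d ≤ dist p x)
    (hhi : ∀ p ∈ T, dist p x < ((k : ℝ) + 1) * d) :
    (T.card : ℝ) ≤ 16 * k + 8 := by
  have hk1 : (1 : ℝ) ≤ (k : ℝ) := by exact_mod_cast hk
  set A : Set (EuclideanSpace ℝ (Fin 2)) := ⋃ p ∈ T, Metric.ball p (d / 2) with hA
  set B : Set (EuclideanSpace ℝ (Fin 2)) := Metric.ball x (((k : ℝ) - 1/2) * d) with hB
  have hdisjAB : Disjoint A B := by
    rw [Set.disjoint_left]
    rintro y hy hyB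
    simp only [hA, Set.mem_iUnion] at hy
    obtain ⟨p, hp, hyp⟩ := hy
    rw [hB, Metric.mem_ball] at hyB
    rw [Metric.mem_ball] at hyp
    have h1 := hlo p hp
    have := dist_triangle p y x
    rw [dist_comm p y] at this
    nlinarith [dist_comm y x ▸ hyB]
  have hdisj : (T : Set (EuclideanSpace ℝ (Fin 2))).PairwiseDisjoint
      (fun p => Metric.ball p (d / 2)) := by
    intro p hp q hq hpq
    exact Metric.ball_disjoint_ball (by linarith [hsep p hp q hq hpq])
  have hUA : volume A = (T.card : ℝ≥0∞) * (ENNReal.ofReal (d/2) ^ 2 * ENNReal.ofReal Real.pi) := by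
    rw [hA, measure_biUnion_finset hdisj (fun p _ => measurableSet_ball)]
    simp [vol2', Finset.sum_const, mul_comm]
  have hsub : A ∪ B ⊆ Metric.ball x (((k : ℝ) + 3/2) * d) := by
    rintro y (hy | hy)
    · simp only [hA, Set.mem_iUnion] at hy
      obtain ⟨p, hp, hyp⟩ := hy
      rw [Metric.mem_ball] at hyp ⊢
      have h1 := hhi p hp
      have h2 := dist_triangle y p x
      linarith
    · rw [hB, Metric.mem_ball] at hy
      rw [Metric.mem_ball]
      nlinarith
  have hle : volume A + volume B ≤ volume (Metric.ball x (((k : ℝ) + 3/2) * d)) := by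
    rw [← measure_union hdisjAB measurableSet_ball]
    exact measure_mono hsub
  rw [hUA, hB, vol2', vol2'] at hle
  have hd2 : (0:ℝ) ≤ d / 2 := by linarith
  have hkd1 : (0:ℝ) ≤ ((k:ℝ) - 1/2) * d := by nlinarith
  have hkd2 : (0:ℝ) ≤ ((k:ℝ) + 3/2) * d := by nlinarith
  have hpi : (0:ℝ) ≤ Real.pi := Real.pi_nonneg
  rw [show ((T.card : ℝ≥0∞)) = ENNReal.ofReal (T.card : ℝ) by simp] at hle
  rw [← ENNReal.ofReal_pow hd2, ← ENNReal.ofReal_pow hkd1, ← ENNReal.ofReal_pow hkd2,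
    ← ENNReal.ofReal_mul (by positivity), ← ENNReal.ofReal_mul (by positivity),
    ← ENNReal.ofReal_mul (by positivity), ← ENNReal.ofReal_mul (by positivity),
    ← ENNReal.ofReal_add (by positivity) (by positivity),
    ENNReal.ofReal_le_ofReal_iff (by positivity)] at hle
  have hdp : (0:ℝ) < d ^ 2 * Real.pi := by positivity
  nlinarith [hle, hdp]

theorem stmt_3 {ι : Type*} [DecidableEq ι] (S : Finset ι) (t r : ι → EuclideanSpace ℝ (Fin 2))
    (r_xcl r_tx α : ℝ) (hα : 2 < α) (hrtx : 0 < r_tx) (hxcl : r_tx < r_xcl)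
    (htx : ∀ i ∈ S, dist (t i) (r i) ≤ r_tx)
    (hsep : ∀ i ∈ S, ∀ j ∈ S, i ≠ j → r_xcl ≤ dist (t j) (r i))
    (hinj : ∀ i ∈ S, ∀ j ∈ S, t i = t j → i = j)
    (i : ι) (hi : i ∈ S) :
    ∑ j ∈ S.erase i, dist (t j) (r i) ^ (-α) ≤
      (∑' k : ℕ, 4 * ((⌈Real.pi * (2 * ((k : ℝ) + 1) + 2)⌉ : ℤ) : ℝ) * ((k : ℝ) + 1) ^ (-α))
        * (r_xcl - r_tx) ^ (-α) := by
  classical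
  set d : ℝ := r_xcl - r_tx with hd
  have hdpos : 0 < d := by simp [hd]; linarith
  set x := r i with hx
  set T := S.erase i with hT
  -- the annulus index
  set m : ι → ℕ := fun j => ⌊dist (t j) x / d⌋₊ with hm
  have hdist : ∀ j ∈ T, r_xcl ≤ dist (t j) x := by
    intro j hj
    exact hsep i hi j (Finset.mem_of_mem_erase hj) (Ne.symm (Finset.ne_of_mem_erase hj))
  have hm1 : ∀ j ∈ T, 1 ≤ m j := by
    intro j hj
    apply Nat.le_floor
    rw [Nat.cast_one, le_div_iff₀ hdpos, one_mul]
    linarith [hdist j hj]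
  have hmlo : ∀ j ∈ T, (m j : ℝ) * d ≤ dist (t j) x := by
    intro j hj
    rw [← le_div_iff₀ hdpos]
    exact Nat.floor_le (by positivity)
  have hmhi : ∀ j ∈ T, dist (t j) x < ((m j : ℝ) + 1) * d := by
    intro j hj
    rw [← div_lt_iff₀ hdpos]
    exact Nat.lt_floor_add_one _
  have hdm : ∀ j ∈ T, 0 < dist (t j) x := fun j hj => lt_of_lt_of_le (by linarith) (hdist j hj)
  -- pointwise bound
  have step1 : ∑ j ∈ T, dist (t j) x ^ (-α) ≤ ∑ j ∈ T, ((m j : ℝ) * d) ^ (-α) := by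
    apply Finset.sum_le_sum
    intro j hj
    apply Real.rpow_le_rpow_of_nonpos _ (hmlo j hj) (by linarith)
    have := hm1 j hj
    have : (1:ℝ) ≤ (m j : ℝ) := by exact_mod_cast this
    nlinarith
  -- fiberwise
  have step2 : ∑ j ∈ T, ((m j : ℝ) * d) ^ (-α) =
      ∑ k ∈ T.image m, ∑ j ∈ T.filter (fun j => m j = k), ((m j : ℝ) * d) ^ (-α) :=
    (Finset.sum_fiberwise_of_maps_to (fun j hj => Finset.mem_image_of_mem m hj) _).symm
  -- count bound per fiber
  have hcount : ∀ k ∈ T.image m, ((T.filter (fun j => m j = k)).card : ℝ) ≤ 16 * k + 8 := by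
    intro k hk
    obtain ⟨j0, hj0, hj0k⟩ := Finset.mem_image.mp hk
    have hk1 : 1 ≤ k := hj0k ▸ hm1 j0 hj0
    set F := T.filter (fun j => m j = k) with hF
    have hinjF : Set.InjOn t F := by
      intro a ha b hb hab
      have haS : a ∈ S := Finset.mem_of_mem_erase (Finset.mem_filter.mp ha).1
      have hbS : b ∈ S := Finset.mem_of_mem_erase (Finset.mem_filter.mp hb).1
      exact hinj a haS b hbS hab
    have hcard : (F.image t).card = F.card := Finset.card_image_of_injOn hinjF
    have := packing d hdpos x (F.image t) k hk1 ?_ ?_ ?_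
    · rw [hcard] at this; exact this
    · intro p hp q hq hpq
      obtain ⟨a, ha, rfl⟩ := Finset.mem_image.mp hp
      obtain ⟨b, hb, rfl⟩ := Finset.mem_image.mp hq
      have haS : a ∈ S := Finset.mem_of_mem_erase (Finset.mem_filter.mp ha).1
      have hbS : b ∈ S := Finset.mem_of_mem_erase (Finset.mem_filter.mp hb).1
      have hab : a ≠ b := fun h => hpq (by rw [h])
      have h1 := hsep b hbS a haS (Ne.symm hab)
      have h2 := htx b hbS
      have h3 := dist_triangle (t a) (t b) (r b)
      linarith
    · intro p hp
      obtain ⟨a, ha, rfl⟩ := Finset.mem_image.mp hp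
      have := hmlo a (Finset.mem_filter.mp ha).1
      rwa [(Finset.mem_filter.mp ha).2] at this
    · intro p hp
      obtain ⟨a, ha, rfl⟩ := Finset.mem_image.mp hp
      have := hmhi a (Finset.mem_filter.mp ha).1
      rwa [(Finset.mem_filter.mp ha).2] at this
  -- the per-annulus bound function
  have hrpow_pos : ∀ k : ℕ, 1 ≤ k → (0:ℝ) < ((k:ℝ) * d) ^ (-α) := by
    intro k hk
    apply Real.rpow_pos_of_pos
    have : (1:ℝ) ≤ (k:ℝ) := by exact_mod_cast hk
    nlinarith
  have hceil : ∀ k : ℕ, 1 ≤ k → (16 * (k:ℝ) + 8) ≤ 4 * ((⌈Real.pi * (2 * (k:ℝ) + 2)⌉ : ℤ) : ℝ) := by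
    intro k hk
    have h1 : Real.pi * (2 * (k:ℝ) + 2) ≤ ((⌈Real.pi * (2 * (k:ℝ) + 2)⌉ : ℤ) : ℝ) :=
      Int.le_ceil _
    have hpi := Real.pi_gt_three
    have hk1 : (1:ℝ) ≤ (k:ℝ) := by exact_mod_cast hk
    nlinarith
  have step3 : ∑ k ∈ T.image m, ∑ j ∈ T.filter (fun j => m j = k), ((m j : ℝ) * d) ^ (-α) ≤
      ∑ k ∈ T.image m, 4 * ((⌈Real.pi * (2 * (k:ℝ) + 2)⌉ : ℤ) : ℝ) * ((k:ℝ) * d) ^ (-α) := by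
    apply Finset.sum_le_sum
    intro k hk
    obtain ⟨j0, hj0, hj0k⟩ := Finset.mem_image.mp hk
    have hk1 : 1 ≤ k := hj0k ▸ hm1 j0 hj0
    have hsum_eq : ∑ j ∈ T.filter (fun j => m j = k), ((m j : ℝ) * d) ^ (-α) =
        ((T.filter (fun j => m j = k)).card : ℝ) * ((k:ℝ) * d) ^ (-α) := by
      rw [Finset.sum_congr rfl (fun j hj => by rw [(Finset.mem_filter.mp hj).2]),
        Finset.sum_const, nsmul_eq_mul]
    rw [hsum_eq]
    have := hrpow_pos k hk1
    calc ((T.filter (fun j => m j = k)).card : ℝ) * ((k:ℝ) * d) ^ (-α)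
        ≤ (16 * k + 8) * ((k:ℝ) * d) ^ (-α) := by
          apply mul_le_mul_of_nonneg_right (hcount k hk) this.le
      _ ≤ 4 * ((⌈Real.pi * (2 * (k:ℝ) + 2)⌉ : ℤ) : ℝ) * ((k:ℝ) * d) ^ (-α) :=
          mul_le_mul_of_nonneg_right (hceil k hk1) this.le
  -- split rpow of product
  have hsplit : ∀ k : ℕ, 1 ≤ k → ((k:ℝ) * d) ^ (-α) = (k:ℝ) ^ (-α) * d ^ (-α) := by
    intro k hk
    apply Real.mul_rpow (by positivity) hdpos.le
  -- summability of the bound function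
  set c : ℕ → ℝ := fun n => 4 * ((⌈Real.pi * (2 * ((n:ℝ) + 1) + 2)⌉ : ℤ) : ℝ) * ((n:ℝ) + 1) ^ (-α)
    with hc
  have hcnonneg : ∀ n, 0 ≤ c n := by
    intro n
    have : (0:ℝ) ≤ ((⌈Real.pi * (2 * ((n:ℝ) + 1) + 2)⌉ : ℤ) : ℝ) := by
      have := Int.le_ceil (Real.pi * (2 * ((n:ℝ) + 1) + 2))
      have hpi := Real.pi_pos
      nlinarith
    positivity
  have hsummable : Summable c := by
    have hbase : Summable (fun n : ℕ => ((n:ℝ) + 1) ^ (1 - α)) := by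
      have h0 : Summable (fun n : ℕ => ((n:ℝ)) ^ (1 - α)) :=
        Real.summable_nat_rpow.mpr (by linarith)
      have := (summable_nat_add_iff 1).mpr h0
      refine this.congr fun n => ?_
      push_cast
      ring_nf
    apply Summable.of_nonneg_of_le hcnonneg _ (hbase.mul_left (4 * (4 * Real.pi + 1)))
    intro n
    have hn1 : (0:ℝ) < (n:ℝ) + 1 := by positivity
    have hceil2 : ((⌈Real.pi * (2 * ((n:ℝ) + 1) + 2)⌉ : ℤ) : ℝ) ≤
        (4 * Real.pi + 1) * ((n:ℝ) + 1) := by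
      have h1 := Int.ceil_lt_add_one (Real.pi * (2 * ((n:ℝ) + 1) + 2))
      have hpi := Real.pi_pos
      nlinarith
    have hsplit2 : ((n:ℝ) + 1) ^ (1 - α) = ((n:ℝ) + 1) * ((n:ℝ) + 1) ^ (-α) := by
      rw [show (1 : ℝ) - α = 1 + (-α) by ring, Real.rpow_add hn1, Real.rpow_one]
    rw [hc]
    simp only
    rw [hsplit2]
    have hr := Real.rpow_pos_of_pos hn1 (-α)
    calc 4 * ((⌈Real.pi * (2 * ((n:ℝ) + 1) + 2)⌉ : ℤ) : ℝ) * ((n:ℝ) + 1) ^ (-α)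
        ≤ 4 * ((4 * Real.pi + 1) * ((n:ℝ) + 1)) * ((n:ℝ) + 1) ^ (-α) := by
          apply mul_le_mul_of_nonneg_right _ hr.le
          linarith
      _ = 4 * (4 * Real.pi + 1) * (((n:ℝ) + 1) * ((n:ℝ) + 1) ^ (-α)) := by ring
  -- reindex the finite sum and compare with the tsum
  have step4 : ∑ k ∈ T.image m, 4 * ((⌈Real.pi * (2 * (k:ℝ) + 2)⌉ : ℤ) : ℝ) * ((k:ℝ) * d) ^ (-α)
      ≤ (∑' n : ℕ, c n) * d ^ (-α) := by
    have hall1 : ∀ k ∈ T.image m, 1 ≤ k := by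
      intro k hk
      obtain ⟨j0, hj0, hj0k⟩ := Finset.mem_image.mp hk
      exact hj0k ▸ hm1 j0 hj0
    set B := (T.image m).image (fun k => k - 1) with hB
    have himg : B.image (fun n => n + 1) = T.image m := by
      rw [hB, Finset.image_image]
      apply Finset.image_congr (g := id) ?_ |>.trans (Finset.image_id)
      intro k hk
      have := hall1 k hk
      simp only [Function.comp, id_eq]
      omega
    have hinj1 : ∀ a ∈ B, ∀ b ∈ B, a + 1 = b + 1 → a = b := fun a _ b _ h => by omega
    rw [← himg, Finset.sum_image hinj1]
    have heq : ∀ n ∈ B, 4 * ((⌈Real.pi * (2 * ((n+1 : ℕ):ℝ) + 2)⌉ : ℤ) : ℝ)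
        * (((n+1 : ℕ):ℝ) * d) ^ (-α) = c n * d ^ (-α) := by
      intro n _
      rw [hsplit (n+1) (by omega)]
      rw [hc]
      push_cast
      ring
    rw [Finset.sum_congr rfl heq, ← Finset.sum_mul]
    apply mul_le_mul_of_nonneg_right _ (Real.rpow_nonneg hdpos.le _)
    exact Summable.sum_le_tsum B (fun n _ => hcnonneg n) hsummable
  have : ∑' (k : ℕ), 4 * ((⌈Real.pi * (2 * ((k : ℝ) + 1) + 2)⌉ : ℤ) : ℝ) * ((k : ℝ) + 1) ^ (-α)
      = ∑' n, c n := rfl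
  rw [this]
  calc ∑ j ∈ T, dist (t j) x ^ (-α) ≤ ∑ j ∈ T, ((m j : ℝ) * d) ^ (-α) := step1
    _ = _ := step2
    _ ≤ _ := step3
    _ ≤ (∑' n, c n) * d ^ (-α) := step4
end

section
/- Let S be a set of links with transmitters t_i ∈ ℝ² satisfying |t_j − t_i| ≥ r_cs > 0 for all distinct i, j ∈ S. Then for every i ∈ S, Σ_{j ∈ S, j ≠ i} |t_j − t_i|^{-α} ≤ k(α)·r_cs^{-α}, where k(α) = Σ_{k=1}^∞ 4·⌈π(2k+2)⌉·k^{-α} and α > 2. -/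
open Metric MeasureTheory

/-- Packing lemma: an `r`-separated family of points lying in the annulus
`m*r ≤ dist · c < (m+1)*r` (with `m ≥ 1`) in the plane has at most `16m+8` members. -/
lemma pack_count {ι : Type*} (T : Finset ι) (t : ι → EuclideanSpace ℝ (Fin 2))
    (c : EuclideanSpace ℝ (Fin 2)) (r : ℝ) (hr : 0 < r) (m : ℕ) (hm : 1 ≤ m)
    (hsep : ∀ j ∈ T, ∀ j' ∈ T, j ≠ j' → r ≤ dist (t j) (t j'))
    (hlo : ∀ j ∈ T, (m : ℝ) * r ≤ dist (t j) c)
    (hhi : ∀ j ∈ T, dist (t j) c < ((m : ℝ) + 1) * r) :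
    (T.card : ℝ) ≤ 16 * m + 8 := by
  have hm' : (1 : ℝ) ≤ (m : ℝ) := by exact_mod_cast hm
  set v := volume (ball (0 : EuclideanSpace ℝ (Fin 2)) 1) with hv
  have hv0 : v ≠ 0 := (measure_ball_pos _ _ one_pos).ne'
  have hvt : v ≠ ⊤ := (measure_ball_lt_top).ne
  have hfr : Module.finrank ℝ (EuclideanSpace ℝ (Fin 2)) = 2 := by simp
  have hballvol : ∀ (x : EuclideanSpace ℝ (Fin 2)) (s : ℝ), 0 ≤ s →
      volume (ball x s) = ENNReal.ofReal (s ^ 2) * v := by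
    intro x s hs
    rw [hv, Measure.addHaar_ball volume x hs, hfr]
  have hcballvol : ∀ (x : EuclideanSpace ℝ (Fin 2)) (s : ℝ), 0 ≤ s →
      volume (closedBall x s) = ENNReal.ofReal (s ^ 2) * v := by
    intro x s hs
    rw [hv, Measure.addHaar_closedBall volume x hs, hfr]
  have hR1 : (0:ℝ) ≤ ((m:ℝ) - 1/2) * r := by nlinarith
  have hR2 : (0:ℝ) ≤ ((m:ℝ) + 3/2) * r := by positivity
  set U : Set (EuclideanSpace ℝ (Fin 2)) := ⋃ j ∈ T, ball (t j) (r/2) with hU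
  have hdisjU : Disjoint U (closedBall c (((m:ℝ) - 1/2) * r)) := by
    rw [Set.disjoint_left]
    intro x hx hx'
    simp only [hU, Set.mem_iUnion] at hx
    obtain ⟨j, hj, hxj⟩ := hx
    have h1 : dist x c ≤ ((m:ℝ) - 1/2) * r := mem_closedBall.mp hx'
    have h2 : dist x (t j) < r/2 := mem_ball.mp hxj
    have h3 := hlo j hj
    have h4 := dist_triangle (t j) x c
    rw [dist_comm (t j) x] at h4
    linarith
  have hsub : U ∪ closedBall c (((m:ℝ) - 1/2) * r) ⊆ ball c (((m:ℝ) + 3/2) * r) := by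
    intro x hx
    rcases hx with hx | hx
    · simp only [hU, Set.mem_iUnion] at hx
      obtain ⟨j, hj, hxj⟩ := hx
      have h2 : dist x (t j) < r/2 := mem_ball.mp hxj
      have h3 := hhi j hj
      have h4 := dist_triangle x (t j) c
      exact mem_ball.mpr (by linarith)
    · have h1 := mem_closedBall.mp hx
      exact mem_ball.mpr (by nlinarith)
  have hpd : (↑T : Set ι).PairwiseDisjoint (fun j => ball (t j) (r/2)) := by
    intro j hj j' hj' hne
    exact ball_disjoint_ball (by have := hsep j hj j' hj' hne; linarith)
  have hUvol : volume U = (T.card : ENNReal) * (ENNReal.ofReal ((r/2) ^ 2) * v) := by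
    rw [hU, measure_biUnion_finset hpd (fun b _ => measurableSet_ball),
      Finset.sum_congr rfl (fun j _ => hballvol (t j) (r/2) (by positivity)),
      Finset.sum_const, nsmul_eq_mul]
  have key : volume U + volume (closedBall c (((m:ℝ) - 1/2) * r))
      ≤ volume (ball c (((m:ℝ) + 3/2) * r)) := by
    rw [← measure_union hdisjU measurableSet_closedBall]
    exact measure_mono hsub
  rw [hUvol, hcballvol _ _ hR1, hballvol _ _ hR2] at key
  have hcomb : (T.card : ENNReal) * (ENNReal.ofReal ((r/2) ^ 2) * v)
      + ENNReal.ofReal ((((m:ℝ) - 1/2) * r) ^ 2) * v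
      = ENNReal.ofReal ((T.card : ℝ) * (r/2) ^ 2 + (((m:ℝ) - 1/2) * r) ^ 2) * v := by
    rw [ENNReal.ofReal_add (by positivity) (by positivity), add_mul, ← mul_assoc,
      ENNReal.ofReal_mul (by positivity), ENNReal.ofReal_natCast]
  rw [hcomb] at key
  have key2 : (T.card : ℝ) * (r/2) ^ 2 + (((m:ℝ) - 1/2) * r) ^ 2
      ≤ (((m:ℝ) + 3/2) * r) ^ 2 := by
    have h := (ENNReal.mul_le_mul_iff_left hv0 hvt).mp key
    exact (ENNReal.ofReal_le_ofReal_iff (by positivity)).mp h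
  nlinarith [mul_pos hr hr, sq_nonneg r]

theorem stmt_4 {ι : Type*} [DecidableEq ι] (S : Finset ι) (t : ι → EuclideanSpace ℝ (Fin 2))
    (r_cs α : ℝ) (hα : 2 < α) (hrcs : 0 < r_cs)
    (hsep : ∀ i ∈ S, ∀ j ∈ S, i ≠ j → r_cs ≤ dist (t j) (t i))
    (i : ι) (hi : i ∈ S) :
    ∑ j ∈ S.erase i, dist (t j) (t i) ^ (-α) ≤
      (∑' k : ℕ, 4 * ((⌈Real.pi * (2 * ((k : ℝ) + 1) + 2)⌉ : ℤ) : ℝ) * ((k : ℝ) + 1) ^ (-α))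
        * r_cs ^ (-α) := by
  set P := S.erase i with hP
  set f : ℕ → ℝ := fun k =>
    4 * ((⌈Real.pi * (2 * ((k : ℝ) + 1) + 2)⌉ : ℤ) : ℝ) * ((k : ℝ) + 1) ^ (-α) with hf
  -- nonnegativity and summability of f
  have hpi3 := Real.pi_gt_three
  have hfnonneg : ∀ k, 0 ≤ f k := by
    intro k
    have h1 : (0:ℝ) ≤ ((⌈Real.pi * (2 * ((k : ℝ) + 1) + 2)⌉ : ℤ) : ℝ) := by
      have : (0:ℝ) ≤ Real.pi * (2 * ((k : ℝ) + 1) + 2) := by positivity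
      exact_mod_cast Int.ceil_nonneg this
    have h2 : (0:ℝ) ≤ ((k : ℝ) + 1) ^ (-α) := Real.rpow_nonneg (by positivity) _
    positivity
  have hsum : Summable f := by
    have hbase : Summable (fun k : ℕ => ((k : ℝ) + 1) ^ (1 - α)) := by
      have h1 : Summable (fun k : ℕ => (k : ℝ) ^ (1 - α)) :=
        Real.summable_nat_rpow.mpr (by linarith)
      have h2 := (summable_nat_add_iff (f := fun k : ℕ => (k : ℝ) ^ (1 - α)) 1).mpr h1
      refine h2.congr fun k => ?_
      push_cast
      ring_nf
    refine Summable.of_nonneg_of_le hfnonneg ?_ (hbase.mul_left (4 * (4 * Real.pi + 1)))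
    intro k
    have hk1 : (0:ℝ) < (k : ℝ) + 1 := by positivity
    have hceil : ((⌈Real.pi * (2 * ((k : ℝ) + 1) + 2)⌉ : ℤ) : ℝ)
        ≤ Real.pi * (2 * ((k : ℝ) + 1) + 2) + 1 := by
      have := Int.ceil_lt_add_one (Real.pi * (2 * ((k : ℝ) + 1) + 2))
      linarith
    have hceil2 : ((⌈Real.pi * (2 * ((k : ℝ) + 1) + 2)⌉ : ℤ) : ℝ)
        ≤ (4 * Real.pi + 1) * ((k : ℝ) + 1) := by nlinarith
    have hrpow : ((k : ℝ) + 1) ^ (1 - α) = ((k : ℝ) + 1) * ((k : ℝ) + 1) ^ (-α) := by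
      rw [show (1 : ℝ) - α = 1 + (-α) by ring, Real.rpow_add hk1, Real.rpow_one]
    have hnn : (0:ℝ) ≤ ((k : ℝ) + 1) ^ (-α) := Real.rpow_nonneg (by positivity) _
    rw [hf]
    simp only
    rw [hrpow]
    nlinarith
  -- binning
  set K : ι → ℕ := fun j => (⌊dist (t j) (t i) / r_cs⌋).toNat with hK
  have hKprop : ∀ j ∈ P, 1 ≤ K j ∧ (K j : ℝ) * r_cs ≤ dist (t j) (t i) ∧
      dist (t j) (t i) < ((K j : ℝ) + 1) * r_cs := by
    intro j hj
    have hjS : j ∈ S := Finset.mem_of_mem_erase hj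
    have hji : j ≠ i := Finset.ne_of_mem_erase hj
    have hd : r_cs ≤ dist (t j) (t i) := hsep i hi j hjS (Ne.symm hji)
    have hq1 : (1:ℝ) ≤ dist (t j) (t i) / r_cs := (one_le_div hrcs).mpr hd
    have hfl1 : (1:ℤ) ≤ ⌊dist (t j) (t i) / r_cs⌋ := by
      exact_mod_cast Int.le_floor.mpr (by exact_mod_cast hq1)
    have htn : ((K j : ℤ)) = ⌊dist (t j) (t i) / r_cs⌋ := by
      rw [hK]; exact Int.toNat_of_nonneg (by linarith)
    have hKr : ((K j : ℝ)) = ((⌊dist (t j) (t i) / r_cs⌋ : ℤ) : ℝ) := by exact_mod_cast htn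
    refine ⟨?_, ?_, ?_⟩
    · have : (1:ℤ) ≤ (K j : ℤ) := by rw [htn]; exact hfl1
      exact_mod_cast this
    · have h1 : ((K j : ℝ)) ≤ dist (t j) (t i) / r_cs := by
        rw [hKr]; exact Int.floor_le _
      calc (K j : ℝ) * r_cs ≤ (dist (t j) (t i) / r_cs) * r_cs :=
            mul_le_mul_of_nonneg_right h1 hrcs.le
        _ = dist (t j) (t i) := div_mul_cancel₀ _ hrcs.ne'
    · have h1 : dist (t j) (t i) / r_cs < (K j : ℝ) + 1 := by
        rw [hKr]; exact Int.lt_floor_add_one _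
      calc dist (t j) (t i) = (dist (t j) (t i) / r_cs) * r_cs :=
            (div_mul_cancel₀ _ hrcs.ne').symm
        _ < ((K j : ℝ) + 1) * r_cs := by
            exact mul_lt_mul_of_pos_right h1 hrcs
  set N : ℕ := P.sup K + 1 with hN
  have hmaps : ∀ j ∈ P, K j - 1 ∈ Finset.range N := by
    intro j hj
    have h1 := (hKprop j hj).1
    have h2 : K j ≤ P.sup K := Finset.le_sup hj
    simp only [Finset.mem_range, hN]
    omega
  have hsplit : ∑ j ∈ P, dist (t j) (t i) ^ (-α)
      = ∑ k ∈ Finset.range N, ∑ j ∈ P.filter (fun j => K j - 1 = k),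
          dist (t j) (t i) ^ (-α) :=
    (Finset.sum_fiberwise_of_maps_to hmaps _).symm
  have hbin : ∀ k ∈ Finset.range N,
      ∑ j ∈ P.filter (fun j => K j - 1 = k), dist (t j) (t i) ^ (-α)
        ≤ f k * r_cs ^ (-α) := by
    intro k _
    set T := P.filter (fun j => K j - 1 = k) with hT
    have hTsub : ∀ j ∈ T, j ∈ P := fun j hj => (Finset.mem_filter.mp hj).1
    have hTK : ∀ j ∈ T, K j = k + 1 := by
      intro j hj
      have h1 := (hKprop j (hTsub j hj)).1
      have h2 := (Finset.mem_filter.mp hj).2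
      omega
    have hm1 : 1 ≤ k + 1 := Nat.le_add_left 1 k
    -- each term bound
    have hterm : ∀ j ∈ T, dist (t j) (t i) ^ (-α)
        ≤ ((k : ℝ) + 1) ^ (-α) * r_cs ^ (-α) := by
      intro j hj
      have hlo := (hKprop j (hTsub j hj)).2.1
      rw [hTK j hj] at hlo
      push_cast at hlo
      have hbase : (0:ℝ) < ((k : ℝ) + 1) * r_cs := by positivity
      have := Real.rpow_le_rpow_of_nonpos hbase hlo (neg_nonpos.mpr (by linarith : (0:ℝ) ≤ α))
      rwa [Real.mul_rpow (by positivity) hrcs.le] at this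
    -- cardinality bound
    have hcard : (T.card : ℝ) ≤ 16 * ((k:ℝ)+1) + 8 := by
      have hpc : (T.card : ℝ) ≤ 16 * ((k+1 : ℕ) : ℝ) + 8 := by
        refine pack_count T t (t i) r_cs hrcs (k+1) hm1 ?_ ?_ ?_
        · intro j hj j' hj' hne
          have hjS : j ∈ S := Finset.mem_of_mem_erase (hTsub j hj)
          have hjS' : j' ∈ S := Finset.mem_of_mem_erase (hTsub j' hj')
          have := hsep j hjS j' hjS' hne
          rwa [dist_comm] at this
        · intro j hj
          have hlo := (hKprop j (hTsub j hj)).2.1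
          rw [hTK j hj] at hlo
          push_cast at hlo ⊢
          linarith
        · intro j hj
          have hhi := (hKprop j (hTsub j hj)).2.2
          rw [hTK j hj] at hhi
          push_cast at hhi ⊢
          linarith
      push_cast at hpc
      linarith
    have hcoef : (16 * ((k:ℝ)+1) + 8)
        ≤ 4 * ((⌈Real.pi * (2 * ((k : ℝ) + 1) + 2)⌉ : ℤ) : ℝ) := by
      have h1 : Real.pi * (2 * ((k : ℝ) + 1) + 2)
          ≤ ((⌈Real.pi * (2 * ((k : ℝ) + 1) + 2)⌉ : ℤ) : ℝ) := Int.le_ceil _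
      nlinarith [Nat.cast_nonneg (α := ℝ) k]
    have hnn : (0:ℝ) ≤ ((k : ℝ) + 1) ^ (-α) * r_cs ^ (-α) := by
      have := Real.rpow_nonneg (show (0:ℝ) ≤ (k:ℝ)+1 by positivity) (-α)
      have := Real.rpow_nonneg hrcs.le (-α)
      positivity
    calc ∑ j ∈ T, dist (t j) (t i) ^ (-α)
        ≤ ∑ _j ∈ T, ((k : ℝ) + 1) ^ (-α) * r_cs ^ (-α) := Finset.sum_le_sum hterm
      _ = (T.card : ℝ) * (((k : ℝ) + 1) ^ (-α) * r_cs ^ (-α)) := by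
          rw [Finset.sum_const, nsmul_eq_mul]
      _ ≤ (16 * ((k:ℝ)+1) + 8) * (((k : ℝ) + 1) ^ (-α) * r_cs ^ (-α)) := by
          apply mul_le_mul_of_nonneg_right _ hnn
          push_cast at hcard ⊢; linarith
      _ ≤ (4 * ((⌈Real.pi * (2 * ((k : ℝ) + 1) + 2)⌉ : ℤ) : ℝ))
            * (((k : ℝ) + 1) ^ (-α) * r_cs ^ (-α)) :=
          mul_le_mul_of_nonneg_right hcoef hnn
      _ = f k * r_cs ^ (-α) := by rw [hf]; ring
  have hrpow_nn : (0:ℝ) ≤ r_cs ^ (-α) := Real.rpow_nonneg hrcs.le _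
  calc ∑ j ∈ P, dist (t j) (t i) ^ (-α)
      = ∑ k ∈ Finset.range N, ∑ j ∈ P.filter (fun j => K j - 1 = k),
          dist (t j) (t i) ^ (-α) := hsplit
    _ ≤ ∑ k ∈ Finset.range N, f k * r_cs ^ (-α) := Finset.sum_le_sum hbin
    _ = (∑ k ∈ Finset.range N, f k) * r_cs ^ (-α) := by rw [Finset.sum_mul]
    _ ≤ (∑' k : ℕ, f k) * r_cs ^ (-α) := by
        apply mul_le_mul_of_nonneg_right _ hrpow_nn
        exact Summable.sum_le_tsum _ (fun k _ => hfnonneg k) hsum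
    _ = _ := by rw [hf]
end

section
/- Fix power P > 0, noise N₀ ≥ 0, thresholds β > 0, β' ≥ (2 + β^{1/α})^α, and path-loss exponent α ≥ 1. Suppose every link i satisfies P·|t_i − r_i|^{-α} ≥ β·N₀ (transmission feasible without interference). If a set S of links satisfies the uni-directional pairwise SINR constraint with threshold β', i.e., for all distinct i, j ∈ S: P·|t_i − r_i|^{-α} / (N₀ + P·|t_j − r_i|^{-α}) ≥ β', then S satisfies the bi-directional pairwise SINR constraint with threshold β: for all distinct i, j ∈ S, P·|t_i − r_i|^{-α} / (N₀ + P·(dist(i,j))^{-α}) ≥ β, where dist(i,j) = min(|t_j − r_i|, |r_j − t_i|, |r_j − r_i|, |t_j − t_i|). -/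
/-- From a uni-directional SINR bound with threshold β', the cross distance
dominates `β'^(1/α)` times the link length. -/
lemma aux_len_bound (P N0 α β' ℓ D : ℝ) (hP : 0 < P) (hN : 0 ≤ N0) (hβ' : 0 < β')
    (hα : 0 < α) (hℓ : 0 < ℓ) (hD : 0 < D)
    (h : β' * (N0 + P * D ^ (-α)) ≤ P * ℓ ^ (-α)) :
    β' ^ (1 / α) * ℓ ≤ D := by
  have hDα : 0 < D ^ α := Real.rpow_pos_of_pos hD α
  have hLα : 0 < ℓ ^ α := Real.rpow_pos_of_pos hℓ α
  have h1 : β' * D ^ (-α) ≤ ℓ ^ (-α) := by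
    have hx : 0 < D ^ (-α) := Real.rpow_pos_of_pos hD _
    nlinarith [mul_nonneg hβ'.le hN]
  have h1' : β' / D ^ α ≤ 1 / ℓ ^ α := by
    rw [Real.rpow_neg hD.le, Real.rpow_neg hℓ.le] at h1
    rw [div_eq_mul_inv, one_div]
    exact h1
  have h2 : β' * ℓ ^ α ≤ D ^ α := by
    have := (div_le_div_iff₀ hDα hLα).mp h1'
    linarith
  have hc : (β' ^ (1 / α)) ^ α = β' := by
    rw [← Real.rpow_mul hβ'.le, one_div, inv_mul_cancel₀ hα.ne', Real.rpow_one]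
  have h3 : (β' ^ (1 / α) * ℓ) ^ α ≤ D ^ α := by
    rw [Real.mul_rpow (Real.rpow_nonneg hβ'.le _) hℓ.le, hc]
    exact h2
  exact (Real.rpow_le_rpow_iff (by positivity) hD.le hα).mp h3

set_option maxHeartbeats 1000000 in
theorem stmt_7 {ι : Type*} (S : Finset ι) (t r : ι → EuclideanSpace ℝ (Fin 2))
    (P N0 α β β' : ℝ) (hP : 0 < P) (hN : 0 ≤ N0) (hβ : 0 < β) (hα : 1 ≤ α)
    (hβ' : β' ≥ (2 + β ^ (1 / α)) ^ α)
    (hlen : ∀ i ∈ S, 0 < dist (t i) (r i))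
    (hfeas : ∀ i ∈ S, β * N0 ≤ P * dist (t i) (r i) ^ (-α))
    (hdistpos : ∀ i ∈ S, ∀ j ∈ S, i ≠ j →
      0 < min (min (dist (t j) (r i)) (dist (r j) (t i)))
              (min (dist (r j) (r i)) (dist (t j) (t i))))
    (huni : ∀ i ∈ S, ∀ j ∈ S, i ≠ j →
      β' ≤ P * dist (t i) (r i) ^ (-α) / (N0 + P * dist (t j) (r i) ^ (-α))) :
    ∀ i ∈ S, ∀ j ∈ S, i ≠ j →
      β ≤ P * dist (t i) (r i) ^ (-α) /
        (N0 + P * (min (min (dist (t j) (r i)) (dist (r j) (t i)))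
                       (min (dist (r j) (r i)) (dist (t j) (t i)))) ^ (-α)) := by
  intro i hi j hj hij
  have hα0 : (0:ℝ) < α := lt_of_lt_of_le one_pos hα
  set b := β ^ (1 / α) with hb_def
  set c := β' ^ (1 / α) with hc_def
  have hb0 : 0 < b := Real.rpow_pos_of_pos hβ _
  have hβ'0 : 0 < β' := by
    have h2b : (0:ℝ) < 2 + b := by positivity
    exact lt_of_lt_of_le (Real.rpow_pos_of_pos h2b α) hβ'
  have hc0 : 0 < c := Real.rpow_pos_of_pos hβ'0 _
  -- c ≥ 2 + b
  have hc2b : 2 + b ≤ c := by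
    have h1 : ((2 + b) ^ α) ^ (1 / α) ≤ β' ^ (1 / α) :=
      Real.rpow_le_rpow (by positivity) hβ' (by positivity)
    rwa [← Real.rpow_mul (by positivity), mul_one_div, div_self hα0.ne',
      Real.rpow_one] at h1
  have hbα : b ^ α = β := by
    rw [hb_def, ← Real.rpow_mul hβ.le, one_div, inv_mul_cancel₀ hα0.ne', Real.rpow_one]
  have hcα : c ^ α = β' := by
    rw [hc_def, ← Real.rpow_mul hβ'0.le, one_div, inv_mul_cancel₀ hα0.ne', Real.rpow_one]
  -- notation
  set ℓi := dist (t i) (r i) with hℓi_def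
  set ℓj := dist (t j) (r j) with hℓj_def
  set D := dist (t j) (r i) with hD_def
  set E := dist (r j) (t i) with hE_def
  set F := dist (r j) (r i) with hF_def
  set G := dist (t j) (t i) with hG_def
  set d := min (min D E) (min F G) with hd_def
  have hℓi0 : 0 < ℓi := hlen i hi
  have hℓj0 : 0 < ℓj := hlen j hj
  have hd0 : 0 < d := hdistpos i hi j hj hij
  have hdD : d ≤ D := (min_le_left _ _).trans (min_le_left _ _)
  have hdE : d ≤ E := (min_le_left _ _).trans (min_le_right _ _)
  have hD0 : 0 < D := lt_of_lt_of_le hd0 hdD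
  have hE0 : 0 < E := lt_of_lt_of_le hd0 hdE
  -- unfold the uni-directional constraints
  have denD : 0 < N0 + P * D ^ (-α) := by positivity
  have denE : 0 < N0 + P * E ^ (-α) := by positivity
  have h1 : β' * (N0 + P * D ^ (-α)) ≤ P * ℓi ^ (-α) := by
    have h := huni i hi j hj hij
    rw [le_div_iff₀ denD] at h
    exact h
  have h2 : β' * (N0 + P * E ^ (-α)) ≤ P * ℓj ^ (-α) := by
    have h := huni j hj i hi hij.symm
    rw [dist_comm (t i) (r j)] at h
    rw [le_div_iff₀ denE] at h
    exact h
  have hℓiD : c * ℓi ≤ D := aux_len_bound P N0 α β' ℓi D hP hN hβ'0 hα0 hℓi0 hD0 h1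
  have hℓjE : c * ℓj ≤ E := aux_len_bound P N0 α β' ℓj E hP hN hβ'0 hα0 hℓj0 hE0 h2
  -- triangle inequalities
  have hdlow : D - ℓi - ℓj ≤ d := by
    refine le_min (le_min (by linarith) ?_) (le_min ?_ ?_)
    · have h := dist_triangle4 (t j) (r j) (t i) (r i)
      rw [← hD_def, ← hℓj_def, ← hE_def, ← hℓi_def] at h
      linarith
    · have h := dist_triangle (t j) (r j) (r i)
      rw [← hD_def, ← hℓj_def, ← hF_def] at h
      linarith
    · have h := dist_triangle (t j) (t i) (r i)
      rw [← hD_def, ← hG_def, ← hℓi_def] at h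
      linarith
  have hElow : E - ℓi - ℓj ≤ d := by
    refine le_min (le_min ?_ (by linarith)) (le_min ?_ ?_)
    · have h := dist_triangle4 (r j) (t j) (r i) (t i)
      rw [dist_comm (r j) (t j), dist_comm (r i) (t i)] at h
      rw [← hE_def, ← hℓj_def, ← hD_def, ← hℓi_def] at h
      linarith
    · have h := dist_triangle (r j) (r i) (t i)
      rw [dist_comm (r i) (t i)] at h
      rw [← hE_def, ← hF_def, ← hℓi_def] at h
      linarith
    · have h := dist_triangle (r j) (t j) (t i)
      rw [dist_comm (r j) (t j)] at h
      rw [← hE_def, ← hℓj_def, ← hG_def] at h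
      linarith
  -- key inequality : b * D ≤ c * d
  have hbDcd : b * D ≤ c * d := by
    have h₁ : (c - 1) * (D - ℓi - ℓj) ≤ (c - 1) * d :=
      mul_le_mul_of_nonneg_left hdlow (by linarith)
    have h₂ : b * D ≤ (c - 2) * D :=
      mul_le_mul_of_nonneg_right (by linarith) hD0.le
    nlinarith [hℓiD, hℓjE, hElow, h₁, h₂]
  -- turn into rpow comparison: β * D^α ≤ β' * d^α
  have hpow : β * D ^ α ≤ β' * d ^ α := by
    have h3 : (b * D) ^ α ≤ (c * d) ^ α :=
      Real.rpow_le_rpow (by positivity) hbDcd hα0.le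
    rwa [Real.mul_rpow hb0.le hD0.le, Real.mul_rpow hc0.le hd0.le, hbα, hcα] at h3
  -- hence β * d^(-α) ≤ β' * D^(-α)
  have hinterf : β * d ^ (-α) ≤ β' * D ^ (-α) := by
    rw [Real.rpow_neg hd0.le, Real.rpow_neg hD0.le, ← div_eq_mul_inv, ← div_eq_mul_inv]
    rw [div_le_div_iff₀ (Real.rpow_pos_of_pos hd0 α) (Real.rpow_pos_of_pos hD0 α)]
    linarith
  -- β ≤ β'
  have hββ' : β ≤ β' := by
    have : b ^ α ≤ c ^ α := Real.rpow_le_rpow hb0.le (by linarith) hα0.le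
    rwa [hbα, hcα] at this
  -- finish
  have dend : 0 < N0 + P * d ^ (-α) := by positivity
  rw [le_div_iff₀ dend]
  have e1 : β * N0 ≤ β' * N0 := mul_le_mul_of_nonneg_right hββ' hN
  have e2 : P * (β * d ^ (-α)) ≤ P * (β' * D ^ (-α)) :=
    mul_le_mul_of_nonneg_left hinterf hP.le
  nlinarith [h1]
end

section
/- For the noise-free (SIR) case: if Δ' ≥ Δ + 2 with Δ > 0, then any set S of links satisfying the uni-directional pairwise SIR constraint |t_j − r_i| ≥ (1+Δ')·|t_i − r_i| for all distinct i, j ∈ S also satisfies the bi-directional pairwise SIR constraint dist(i,j) ≥ (1+Δ)·|t_i − r_i| for all distinct i, j ∈ S, where dist(i,j) = min(|t_j − r_i|, |r_j − t_i|, |r_j − r_i|, |t_j − t_i|). Moreover, the bi-directional constraint with parameter Δ trivially implies the uni-directional constraint with parameter Δ. -/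
theorem stmt_8 {ι : Type*} (S : Finset ι) (t r : ι → EuclideanSpace ℝ (Fin 2))
    (Δ Δ' : ℝ) (hΔ : 0 < Δ) (hΔ' : Δ' ≥ Δ + 2)
    (hlen : ∀ i ∈ S, 0 < dist (t i) (r i)) :
    ((∀ i ∈ S, ∀ j ∈ S, i ≠ j →
        (1 + Δ') * dist (t i) (r i) ≤ dist (t j) (r i)) →
      ∀ i ∈ S, ∀ j ∈ S, i ≠ j →
        (1 + Δ) * dist (t i) (r i) ≤
          min (min (dist (t j) (r i)) (dist (r j) (t i)))
              (min (dist (r j) (r i)) (dist (t j) (t i))))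
    ∧ ((∀ i ∈ S, ∀ j ∈ S, i ≠ j →
        (1 + Δ) * dist (t i) (r i) ≤
          min (min (dist (t j) (r i)) (dist (r j) (t i)))
              (min (dist (r j) (r i)) (dist (t j) (t i)))) →
      ∀ i ∈ S, ∀ j ∈ S, i ≠ j →
        (1 + Δ) * dist (t i) (r i) ≤ dist (t j) (r i)) := by
  constructor
  · intro h i hi j hj hij
    have li := hlen i hi
    have lj := hlen j hj
    have h1 := h i hi j hj hij
    have h2 := h j hj i hi hij.symm
    have e1 : dist (t i) (r j) = dist (r j) (t i) := dist_comm _ _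
    have tri1 : dist (t j) (r i) ≤ dist (t j) (r j) + dist (r j) (t i) + dist (t i) (r i) :=
      dist_triangle4 _ _ _ _
    have tri2 : dist (t j) (r i) ≤ dist (t j) (r j) + dist (r j) (r i) :=
      dist_triangle _ _ _
    have tri3 : dist (t j) (r i) ≤ dist (t j) (t i) + dist (t i) (r i) :=
      dist_triangle _ _ _
    have tri4 : dist (t i) (r j) ≤ dist (t i) (r i) + dist (r i) (r j) :=
      dist_triangle _ _ _
    have e2 : dist (r i) (r j) = dist (r j) (r i) := dist_comm _ _
    have hΔ'pos : (0:ℝ) < 1 + Δ' := by linarith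
    simp only [le_min_iff]
    refine ⟨⟨by nlinarith, ?_⟩, ?_, by nlinarith⟩
    · -- dist (r j) (t i)
      rw [e1] at h2
      nlinarith [dist_nonneg (x := t i) (y := r j)]
    · -- dist (r j) (r i)
      rw [e2] at tri4
      nlinarith [dist_nonneg (x := r j) (y := r i)]
  · intro h i hi j hj hij
    have := h i hi j hj hij
    calc (1 + Δ) * dist (t i) (r i) ≤ _ := this
      _ ≤ _ := (min_le_left _ _).trans (min_le_left _ _)
end

section
/- Let r_tx = max over links i of |t_i − r_i| and suppose r_xcl ≥ (((P/β)·r_tx^{-α} − N₀)/P)^{-1/α}, where (P/β)·r_tx^{-α} > N₀. Then any set S of links satisfying the pairwise fixed-range constraints (|t_j − r_i| ≥ r_xcl for distinct i,j ∈ S and |t_i − r_i| ≤ r_tx for i ∈ S) also satisfies the pairwise SINR constraint: for all distinct i, j ∈ S, P·|t_i − r_i|^{-α} / (N₀ + P·|t_j − r_i|^{-α}) ≥ β. -/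
theorem stmt_11 {ι : Type*} (S : Finset ι) (t r : ι → EuclideanSpace ℝ (Fin 2))
    (P N0 α β r_xcl r_tx : ℝ) (hP : 0 < P) (hN : 0 ≤ N0) (hβ : 0 < β) (hα : 0 < α)
    (hrtx : 0 < r_tx)
    (hnoise : N0 < (P / β) * r_tx ^ (-α))
    (hxcl : r_xcl ≥ (((P / β) * r_tx ^ (-α) - N0) / P) ^ (-(1 / α)))
    (hlen : ∀ i ∈ S, 0 < dist (t i) (r i))
    (htx : ∀ i ∈ S, dist (t i) (r i) ≤ r_tx)
    (hsep : ∀ i ∈ S, ∀ j ∈ S, i ≠ j → r_xcl ≤ dist (t j) (r i)) :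
    ∀ i ∈ S, ∀ j ∈ S, i ≠ j →
      β ≤ P * dist (t i) (r i) ^ (-α) / (N0 + P * dist (t j) (r i) ^ (-α)) := by
  intro i hi j hj hij
  set K : ℝ := ((P / β) * r_tx ^ (-α) - N0) / P with hK
  have hKpos : 0 < K := div_pos (by linarith) hP
  have hKr : 0 < K ^ (-(1 / α)) := Real.rpow_pos_of_pos hKpos _
  set d := dist (t i) (r i)
  set D := dist (t j) (r i)
  have hd : 0 < d := hlen i hi
  have hdle : d ≤ r_tx := htx i hi
  have hDge : K ^ (-(1 / α)) ≤ D := le_trans hxcl (hsep i hi j hj hij)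
  have h1 : r_tx ^ (-α) ≤ d ^ (-α) :=
    Real.rpow_le_rpow_of_nonpos hd hdle (by linarith)
  have h2 : D ^ (-α) ≤ K := by
    have h := Real.rpow_le_rpow_of_nonpos hKr hDge (z := -α) (by linarith)
    calc D ^ (-α) ≤ (K ^ (-(1 / α))) ^ (-α) := h
      _ = K ^ ((-(1 / α)) * (-α)) := (Real.rpow_mul hKpos.le _ _).symm
      _ = K ^ (1 : ℝ) := by rw [show (-(1 / α)) * (-α) = 1 by field_simp]
      _ = K := Real.rpow_one K
  have hDpos : 0 < D := lt_of_lt_of_le hKr hDge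
  have hDr : 0 < D ^ (-α) := Real.rpow_pos_of_pos hDpos _
  have hdenom : 0 < N0 + P * D ^ (-α) := by positivity
  rw [le_div_iff₀ hdenom]
  have hPK : P * K = (P / β) * r_tx ^ (-α) - N0 := by
    rw [hK]; field_simp
  have hβP : β * (P / β) = P := by field_simp
  have step1 : β * (N0 + P * D ^ (-α)) ≤ β * (N0 + P * K) := by
    have := mul_le_mul_of_nonneg_left h2 hP.le
    nlinarith
  have step2 : β * (N0 + P * K) = P * r_tx ^ (-α) := by
    rw [mul_add, hPK, mul_sub, ← mul_assoc, hβP]; ring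
  have step3 : P * r_tx ^ (-α) ≤ P * d ^ (-α) := mul_le_mul_of_nonneg_left h1 hP.le
  linarith
end

section
/- Consider four points t_i, r_i, t_j, r_j in ℝ² with |t_i − r_i| > 0 and |t_j − r_j| > 0. Suppose: (a) P·|t_i − r_i|^{-α}/(N₀ + P·|r_j − r_i|^{-α}) < β, (b) |t_i − r_i| ≥ |t_j − r_j|, and (c) P·|t_i − r_i|^{-α} ≥ β·N₀. Then P·|t_i − r_i|^{-α}/(N₀ + P·|t_j − r_i|^{-α}) < (1 + β^{1/α})^α for α ≥ 1. (Receiver-receiver interference violation implies a bounded transmitter-receiver SINR.) -/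
theorem stmt_12 (ti ri tj rj : EuclideanSpace ℝ (Fin 2))
    (P N0 α β : ℝ) (hP : 0 < P) (hN : 0 ≤ N0) (hβ : 0 < β) (hα : 1 ≤ α)
    (hi : 0 < dist ti ri) (hj : 0 < dist tj rj)
    (hrr : 0 < dist rj ri) (htr : 0 < dist tj ri)
    (ha : P * dist ti ri ^ (-α) / (N0 + P * dist rj ri ^ (-α)) < β)
    (hb : dist tj rj ≤ dist ti ri)
    (hc : β * N0 ≤ P * dist ti ri ^ (-α)) :
    P * dist ti ri ^ (-α) / (N0 + P * dist tj ri ^ (-α)) < (1 + β ^ (1 / α)) ^ α := by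
  set d := dist ti ri with hdd
  set e := dist rj ri with hee
  set f := dist tj ri with hff
  set g := dist tj rj with hgg
  set x := β ^ (1 / α) with hx
  have hα0 : (0:ℝ) < α := lt_of_lt_of_le one_pos hα
  have hx0 : 0 < x := Real.rpow_pos_of_pos hβ _
  have hxα : x ^ α = β := by
    rw [hx, ← Real.rpow_mul hβ.le, one_div, inv_mul_cancel₀ hα0.ne', Real.rpow_one]
  have h1x : (0:ℝ) < 1 + x := by linarith
  have h4 : 0 < (1 + x) ^ α := Real.rpow_pos_of_pos h1x _
  have hfα : 0 < f ^ (-α) := Real.rpow_pos_of_pos htr _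
  have heα : 0 < e ^ (-α) := Real.rpow_pos_of_pos hrr _
  have hden : 0 < N0 + P * f ^ (-α) := by positivity
  have hden2 : 0 < N0 + P * e ^ (-α) := by positivity
  rw [div_lt_iff₀ hden]
  have ha' : P * d ^ (-α) < β * (N0 + P * e ^ (-α)) := (div_lt_iff₀ hden2).mp ha
  have htri : f ≤ d + e := by
    calc f ≤ g + e := dist_triangle tj rj ri
    _ ≤ d + e := by linarith
  rcases lt_or_ge e (x * d) with hcase | hcase
  · -- e < x * d, so f < (1+x) * d and the signal term alone suffices
    have hf : f < (1 + x) * d := by nlinarith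
    have h1 : ((1 + x) * d) ^ (-α) < f ^ (-α) :=
      Real.rpow_lt_rpow_of_neg htr hf (by linarith)
    have h2 : ((1 + x) * d) ^ (-α) = (1 + x) ^ (-α) * d ^ (-α) :=
      Real.mul_rpow h1x.le hi.le
    have h3 : (1 + x) ^ α * (1 + x) ^ (-α) = 1 := by
      rw [← Real.rpow_add h1x]; simp
    have key : P * d ^ (-α) < (1 + x) ^ α * (P * f ^ (-α)) := by
      have h5 := mul_lt_mul_of_pos_left (h2 ▸ h1) (mul_pos h4 hP)
      have h6 : (1 + x) ^ α * P * ((1 + x) ^ (-α) * d ^ (-α)) = P * d ^ (-α) := by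
        rw [show (1 + x) ^ α * P * ((1 + x) ^ (-α) * d ^ (-α))
            = ((1 + x) ^ α * (1 + x) ^ (-α)) * (P * d ^ (-α)) by ring, h3, one_mul]
      rw [h6] at h5
      linarith [h5]
    have hexp : (1 + x) ^ α * (N0 + P * f ^ (-α))
        = (1 + x) ^ α * N0 + (1 + x) ^ α * (P * f ^ (-α)) := by ring
    linarith [mul_nonneg h4.le hN, key]
  · -- x * d ≤ e : compare termwise with ha'
    have hβle : β ≤ (1 + x) ^ α := by
      rw [← hxα]; exact Real.rpow_le_rpow hx0.le (by linarith) hα0.le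
    have hNle : β * N0 ≤ (1 + x) ^ α * N0 := mul_le_mul_of_nonneg_right hβle hN
    have hterm : β * (P * e ^ (-α)) ≤ (1 + x) ^ α * (P * f ^ (-α)) := by
      have he' : e ^ (-α) = (e⁻¹) ^ α := by
        rw [Real.rpow_neg hrr.le, ← Real.inv_rpow hrr.le]
      have hf' : f ^ (-α) = (f⁻¹) ^ α := by
        rw [Real.rpow_neg htr.le, ← Real.inv_rpow htr.le]
      have hmul1 : β * e ^ (-α) = (x * e⁻¹) ^ α := by
        rw [← hxα, he', Real.mul_rpow hx0.le (by positivity)]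
      have hmul2 : (1 + x) ^ α * f ^ (-α) = ((1 + x) * f⁻¹) ^ α := by
        rw [hf', Real.mul_rpow h1x.le (by positivity)]
      have hbase : x * e⁻¹ ≤ (1 + x) * f⁻¹ := by
        rw [← div_eq_mul_inv, ← div_eq_mul_inv, div_le_div_iff₀ hrr htr]
        nlinarith [mul_le_mul_of_nonneg_left htri hx0.le]
      have h7 := Real.rpow_le_rpow (by positivity) hbase hα0.le
      calc β * (P * e ^ (-α)) = P * ((x * e⁻¹) ^ α) := by rw [← hmul1]; ring
        _ ≤ P * (((1 + x) * f⁻¹) ^ α) := mul_le_mul_of_nonneg_left h7 hP.le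
        _ = (1 + x) ^ α * (P * f ^ (-α)) := by rw [← hmul2]; ring
    have hexp1 : β * (N0 + P * e ^ (-α)) = β * N0 + β * (P * e ^ (-α)) := by ring
    have hexp2 : (1 + x) ^ α * (N0 + P * f ^ (-α))
        = (1 + x) ^ α * N0 + (1 + x) ^ α * (P * f ^ (-α)) := by ring
    linarith [ha', hNle, hterm]
end
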